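/- Let k ≥ 2 be an integer and let x₀, x₁ be independent random variables each uniformly distributed on {1, 2, ..., k}. Let M := E(|x₁ - x₀|). Then the third centered moment E((|x₁ - x₀| - M)³) = (k - 1)(k - 2)(k + 2)(k + 1)(2k² - 5)/(270k³). -/

import Mathlib

open MeasureTheory ProbabilityTheory
open scoped ENNReal

/-- The uniform probability measure on the integers `{1, ..., k}` (as a measure on `ℕ`). -/
noncomputable def unifMeasure (k : ℕ) : Measure ℕ :=
  (k : ℝ≥0∞)⁻¹ • ∑ i ∈ Finset.Icc 1 k, Measure.dirac i

section Aux

lemma my_integrable_dirac {α : Type*} [MeasurableSpace α] [MeasurableSingletonClass α]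
    (f : α → ℝ) (a : α) : Integrable f (Measure.dirac a) :=
  (integrable_const (f a)).congr (ae_eq_dirac f).symm

lemma my_integrable_unif (k : ℕ) (hk : k ≠ 0) (f : ℕ → ℝ) : Integrable f (unifMeasure k) := by
  rw [unifMeasure]
  refine Integrable.smul_measure ?_ (by simp [hk])
  exact integrable_finset_sum_measure.2 fun i _ => my_integrable_dirac f i

lemma my_integral_unif (k : ℕ) (f : ℕ → ℝ) :
    ∫ x, f x ∂(unifMeasure k) = (k : ℝ)⁻¹ * ∑ i ∈ Finset.Icc 1 k, f i := by
  rw [unifMeasure, integral_smul_measure,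
    integral_finset_sum_measure (fun i _ => my_integrable_dirac f i)]
  simp [integral_dirac, smul_eq_mul]

instance unif_finite (k : ℕ) : IsFiniteMeasure (unifMeasure k) := by
  constructor
  rw [unifMeasure]
  simp only [Measure.smul_apply, Measure.coe_finset_sum, Finset.sum_apply,
    Measure.dirac_apply_of_mem (Set.mem_univ _), smul_eq_mul]
  rcases Nat.eq_zero_or_pos k with h | h
  · simp [h]
  · rw [Finset.sum_const, Nat.card_Icc]
    simp only [Nat.add_sub_cancel, nsmul_eq_mul, mul_one]
    rw [ENNReal.inv_mul_cancel (by simp; omega) (by simp)]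
    exact ENNReal.one_lt_top

lemma my_integral_unif_prod (k : ℕ) (hk : k ≠ 0) (F : ℕ × ℕ → ℝ) :
    ∫ p, F p ∂((unifMeasure k).prod (unifMeasure k))
      = (k : ℝ)⁻¹ * ((k : ℝ)⁻¹ *
          ∑ i ∈ Finset.Icc 1 k, ∑ j ∈ Finset.Icc 1 k, F (i, j)) := by
  have hFm : Measurable F := measurable_of_countable F
  have hint : Integrable F ((unifMeasure k).prod (unifMeasure k)) := by
    rw [integrable_prod_iff hFm.aestronglyMeasurable]
    exact ⟨Filter.Eventually.of_forall fun x => my_integrable_unif k hk _,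
      my_integrable_unif k hk _⟩
  rw [integral_prod _ hint, my_integral_unif k (fun x => ∫ y, F (x, y) ∂(unifMeasure k))]
  rw [Finset.mul_sum, Finset.mul_sum, ← Finset.mul_sum]
  congr 1
  refine Finset.sum_congr rfl fun i _ => ?_
  exact my_integral_unif k (fun y => F (i, y))

lemma my_integral_comp_pair {Ω : Type*} [MeasurableSpace Ω] (μ : Measure Ω)
    [IsProbabilityMeasure μ] (k : ℕ) (hk : k ≠ 0) (x₀ x₁ : Ω → ℕ)
    (hm0 : Measurable x₀) (hm1 : Measurable x₁)
    (hd0 : Measure.map x₀ μ = unifMeasure k)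
    (hd1 : Measure.map x₁ μ = unifMeasure k)
    (hindep : IndepFun x₀ x₁ μ) (F : ℕ → ℕ → ℝ) :
    ∫ ω, F (x₀ ω) (x₁ ω) ∂μ
      = (k : ℝ)⁻¹ * ((k : ℝ)⁻¹ *
          ∑ i ∈ Finset.Icc 1 k, ∑ j ∈ Finset.Icc 1 k, F i j) := by
  have hmap : μ.map (fun ω => (x₀ ω, x₁ ω)) = (unifMeasure k).prod (unifMeasure k) := by
    rw [(indepFun_iff_map_prod_eq_prod_map_map hm0.aemeasurable hm1.aemeasurable).1 hindep,
      hd0, hd1]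
  have h1 : ∫ ω, F (x₀ ω) (x₁ ω) ∂μ
      = ∫ p, F p.1 p.2 ∂(μ.map (fun ω => (x₀ ω, x₁ ω))) := by
    rw [integral_map (hm0.prodMk hm1).aemeasurable
      (measurable_of_countable _).aestronglyMeasurable]
  rw [h1, hmap, my_integral_unif_prod k hk (fun p => F p.1 p.2)]

/-! Power sums -/

lemma sumS1 (k : ℕ) : ∑ d ∈ Finset.Icc 1 k, (d : ℝ) = k * (k + 1) / 2 := by
  induction k with
  | zero => simp
  | succ n ih =>
    rw [Finset.sum_Icc_succ_top (by omega), ih]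
    push_cast; ring

lemma sumS2 (k : ℕ) : ∑ d ∈ Finset.Icc 1 k, (d : ℝ) ^ 2 = k * (k + 1) * (2 * k + 1) / 6 := by
  induction k with
  | zero => simp
  | succ n ih =>
    rw [Finset.sum_Icc_succ_top (by omega), ih]
    push_cast; ring

lemma sumS3 (k : ℕ) : ∑ d ∈ Finset.Icc 1 k, (d : ℝ) ^ 3 = (k * (k + 1) / 2) ^ 2 := by
  induction k with
  | zero => simp
  | succ n ih =>
    rw [Finset.sum_Icc_succ_top (by omega), ih]
    push_cast; ring

lemma reflect_sum (n : ℕ) (f : ℕ → ℝ) :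
    ∑ i ∈ Finset.Icc 1 n, f (n + 1 - i) = ∑ i ∈ Finset.Icc 1 n, f i := by
  apply Finset.sum_nbij' (fun a => n + 1 - a) (fun a => n + 1 - a) <;>
    intros a ha <;> simp only [Finset.mem_Icc] at * <;> omega

lemma rowT (n p : ℕ) :
    ∑ i ∈ Finset.Icc 1 n, ((n : ℝ) + 1 - i) ^ p = ∑ i ∈ Finset.Icc 1 n, (i : ℝ) ^ p := by
  rw [← reflect_sum n (fun m => (m : ℝ) ^ p)]
  refine Finset.sum_congr rfl fun i hi => ?_
  simp only [Finset.mem_Icc] at hi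
  rw [Nat.cast_sub (by omega)]
  push_cast; ring

/-! Double sums -/

lemma absD (n i : ℕ) (hi : i ∈ Finset.Icc 1 n) :
    |((n : ℝ) + 1) - i| = (n : ℝ) + 1 - i := by
  simp only [Finset.mem_Icc] at hi
  have : (i : ℝ) ≤ n := by exact_mod_cast hi.2
  rw [abs_of_nonneg (by linarith)]

lemma sumD (k p : ℕ) (hp : 1 ≤ p) :
    ∑ i ∈ Finset.Icc 1 (k+1), ∑ j ∈ Finset.Icc 1 (k+1), |(j : ℝ) - i| ^ p
      = (∑ i ∈ Finset.Icc 1 k, ∑ j ∈ Finset.Icc 1 k, |(j : ℝ) - i| ^ p)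
        + 2 * ∑ d ∈ Finset.Icc 1 k, (d : ℝ) ^ p := by
  rw [Finset.sum_Icc_succ_top (by omega : 1 ≤ k + 1)]
  have hrow : ∀ i ∈ Finset.Icc 1 k,
      |((k : ℝ) + 1) - i| ^ p = ((k : ℝ) + 1 - i) ^ p := fun i hi => by
    rw [absD k i hi]
  have h1 : ∑ j ∈ Finset.Icc 1 (k+1), |(j : ℝ) - ((k:ℕ)+1 : ℕ)| ^ p
      = ∑ d ∈ Finset.Icc 1 k, (d : ℝ) ^ p := by
    rw [Finset.sum_Icc_succ_top (by omega : 1 ≤ k + 1)]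
    push_cast
    rw [sub_self, abs_zero, zero_pow (by omega), add_zero]
    rw [← rowT k p]
    refine Finset.sum_congr rfl fun j hj => ?_
    rw [abs_sub_comm, absD k j hj]
  have h2 : ∀ i ∈ Finset.Icc 1 k,
      ∑ j ∈ Finset.Icc 1 (k+1), |(j : ℝ) - i| ^ p
        = (∑ j ∈ Finset.Icc 1 k, |(j : ℝ) - i| ^ p) + ((k : ℝ) + 1 - i) ^ p := by
    intro i hi
    rw [Finset.sum_Icc_succ_top (by omega : 1 ≤ k + 1)]
    push_cast
    rw [absD k i hi]
  rw [Finset.sum_congr rfl h2, Finset.sum_add_distrib]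
  push_cast at h1 ⊢
  rw [h1, rowT k p]
  ring

lemma sumD1 (k : ℕ) :
    ∑ i ∈ Finset.Icc 1 k, ∑ j ∈ Finset.Icc 1 k, |(j : ℝ) - i|
      = k * ((k:ℝ) ^ 2 - 1) / 3 := by
  induction k with
  | zero => simp
  | succ n ih =>
    have := sumD n 1 le_rfl
    simp only [pow_one] at this
    rw [this, ih, sumS1]
    push_cast; ring

lemma sumD2 (k : ℕ) :
    ∑ i ∈ Finset.Icc 1 k, ∑ j ∈ Finset.Icc 1 k, |(j : ℝ) - i| ^ 2
      = (k:ℝ) ^ 2 * ((k:ℝ) ^ 2 - 1) / 6 := by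
  induction k with
  | zero => simp
  | succ n ih =>
    rw [sumD n 2 (by omega), ih, sumS2]
    push_cast; ring

lemma sumD3 (k : ℕ) :
    ∑ i ∈ Finset.Icc 1 k, ∑ j ∈ Finset.Icc 1 k, |(j : ℝ) - i| ^ 3
      = (k:ℝ) ^ 3 * ((k:ℝ) - 1) ^ 2 / 2
        - (k:ℝ) * ((k:ℝ) - 1) * (2 * k - 1) * (3 * (k:ℝ) ^ 2 - 3 * k - 1) / 15 := by
  induction k with
  | zero => simp
  | succ n ih =>
    rw [sumD n 3 (by omega), ih, sumS3]
    push_cast; ring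

end Aux

theorem third_centered_moment_increment_uniform
    {Ω : Type*} [MeasurableSpace Ω] (μ : Measure Ω) [IsProbabilityMeasure μ]
    (k : ℕ) (hk : 2 ≤ k) (x₀ x₁ : Ω → ℕ)
    (hm0 : Measurable x₀) (hm1 : Measurable x₁)
    (hd0 : Measure.map x₀ μ = unifMeasure k)
    (hd1 : Measure.map x₁ μ = unifMeasure k)
    (hindep : IndepFun x₀ x₁ μ)
    (M : ℝ) (hM : M = ∫ ω, |(x₁ ω : ℝ) - (x₀ ω : ℝ)| ∂μ) :
    ∫ ω, (|(x₁ ω : ℝ) - (x₀ ω : ℝ)| - M) ^ 3 ∂μ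
      = ((k : ℝ) - 1) * ((k : ℝ) - 2) * ((k : ℝ) + 2) * ((k : ℝ) + 1)
          * (2 * (k : ℝ) ^ 2 - 5) / (270 * (k : ℝ) ^ 3) := by
  have hk0 : k ≠ 0 := by omega
  have hkR : (k : ℝ) ≠ 0 := Nat.cast_ne_zero.mpr hk0
  have hMval : M = ((k : ℝ) ^ 2 - 1) / (3 * k) := by
    have h := my_integral_comp_pair μ k hk0 x₀ x₁ hm0 hm1 hd0 hd1 hindep
      (fun i j => |(j : ℝ) - i|)
    rw [hM, h, sumD1]
    field_simp
  have h := my_integral_comp_pair μ k hk0 x₀ x₁ hm0 hm1 hd0 hd1 hindep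
    (fun i j => (|(j : ℝ) - i| - M) ^ 3)
  rw [h]
  have expand : ∀ i j : ℕ, (|(j : ℝ) - i| - M) ^ 3
      = |(j : ℝ) - i| ^ 3 - 3 * M * |(j : ℝ) - i| ^ 2
        + 3 * M ^ 2 * |(j : ℝ) - i| - M ^ 3 := fun i j => by ring
  simp only [expand, Finset.sum_sub_distrib, Finset.sum_add_distrib, ← Finset.mul_sum,
    Finset.sum_const, Nat.card_Icc, Nat.add_sub_cancel, nsmul_eq_mul]
  rw [sumD1, sumD2, sumD3, hMval]
  field_simp
  ring
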